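/- Let n ≥ 1, let I ⊆ {0,…,2^n − 1}, and let σ be a permutation of Fin n with σ(n−1) = n−1 that stabilizes I. Since σ fixes n−1, it restricts to a permutation σ' of Fin (n−1) with σ'(k) = σ(k) for all k < n−1. Then σ' stabilizes the high nested subset I^h. -/

import Mathlib

/-- `digitPerm σ i` permutes the (LSB-first) binary digits of `i` according to `σ`. -/
def digitPerm {n : ℕ} (σ : Equiv.Perm (Fin n)) (i : ℕ) : ℕ :=
  ∑ k : Fin n, if Nat.testBit i k.val then 2 ^ ((σ k).val) else 0

/-- `σ` stabilizes the set `I`. -/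
def Stabilizes {n : ℕ} (σ : Equiv.Perm (Fin n)) (I : Set ℕ) : Prop :=
  ∀ i ∈ I, digitPerm σ i ∈ I

/-- High nested subset `I^h`. -/
def highNested (n : ℕ) (I : Set ℕ) : Set ℕ :=
  {j | ∃ i ∈ I, 2 ^ (n - 1) ≤ i ∧ j = i - 2 ^ (n - 1)}

lemma tb1 {m j k : ℕ} (hk : k < m) : (2^m + j).testBit k = j.testBit k := by
  rw [Nat.testBit_eq_decide_div_mod_eq, Nat.testBit_eq_decide_div_mod_eq]
  have h1 : 2^m + j = j + 2^(m-k) * 2^k := by rw [← pow_add, Nat.sub_add_cancel hk.le]; omega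
  rw [h1, Nat.add_mul_div_right _ _ (Nat.two_pow_pos k)]
  have h2 : 2^(m-k) % 2 = 0 := by
    have : 1 ≤ m - k := by omega
    rcases Nat.exists_eq_add_of_le this with ⟨c, hc⟩
    rw [hc, pow_add]; simp [Nat.mul_mod]
  rw [Nat.add_mod, h2, Nat.add_zero, Nat.mod_mod_of_dvd _ dvd_rfl]

lemma tb2 {m j : ℕ} (hj : j < 2^m) : (2^m + j).testBit m = true := by
  rw [Nat.testBit_eq_decide_div_mod_eq,
    Nat.add_div_left _ (Nat.two_pow_pos m), Nat.div_eq_of_lt hj]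
  rfl

lemma key {m : ℕ} (σ : Equiv.Perm (Fin (m+1))) (hσ : σ (Fin.last m) = Fin.last m)
    (σ' : Equiv.Perm (Fin m)) (hσ' : ∀ k : Fin m, (σ' k : ℕ) = ((σ k.castSucc : Fin (m+1)) : ℕ))
    (j : ℕ) (hj : j < 2^m) :
    digitPerm σ (2^m + j) = 2^m + digitPerm σ' j := by
  unfold digitPerm
  rw [Fin.sum_univ_castSucc]
  have hlast : (2^m + j).testBit (Fin.last m).val = true := tb2 hj
  rw [hlast]
  simp only [if_true, hσ, Fin.val_last]
  rw [Nat.add_comm]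
  congr 1
  apply Finset.sum_congr rfl
  intro k _
  rw [tb1 (by exact k.isLt : (k.castSucc : Fin (m+1)).val < m), hσ' k, Fin.coe_castSucc]

theorem restriction_stabilizes_high {n : ℕ} (hn : 1 ≤ n) (I : Set ℕ)
    (hI : I ⊆ {i | i < 2 ^ n}) (σ : Equiv.Perm (Fin n))
    (hσ : σ ⟨n - 1, by omega⟩ = ⟨n - 1, by omega⟩)
    (hstab : Stabilizes σ I)
    (σ' : Equiv.Perm (Fin (n - 1)))
    (hσ' : ∀ k : Fin (n - 1), ((σ' k : ℕ)) = ((σ ⟨k.val, by omega⟩ : Fin n) : ℕ)) :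
    Stabilizes σ' (highNested n I) := by
  obtain ⟨m, rfl⟩ : ∃ m, n = m + 1 := ⟨n - 1, by omega⟩
  intro j hj
  obtain ⟨i, hiI, hile, rfl⟩ := hj
  have hi2 : i < 2^(m+1) := hI hiI
  have hile' : 2^m ≤ i := hile
  have hjlt : i - 2^m < 2^m := by
    have : (2:ℕ)^(m+1) = 2^m * 2 := pow_succ 2 m
    omega
  have hi : i = 2^m + (i - 2^m) := by omega
  have hk : digitPerm σ (2^m + (i - 2^m)) = 2^m + digitPerm σ' (i - 2^m) :=
    key σ hσ σ' (fun k => hσ' k) (i - 2^m) hjlt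
  rw [← hi] at hk
  refine ⟨digitPerm σ i, hstab i hiI, ?_, ?_⟩ <;> simp only [Nat.add_sub_cancel] <;> omega
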